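/- Averaging over only the m cyclic permutations gives the same expectation as the full symmetrizer: ⟨w, (1/m) Σ_{j=0}^{m−1} C^j w⟩ = |⟨α, β⟩|² + (1/m)(1 − |⟨α, β⟩|²), where w = α^{⊗(m−1)} ⊗ β. -/

import Mathlib

/-- Averaging over only the `m` cyclic permutations gives the same expectation in
`w = α^{⊗(m−1)} ⊗ β` as the full symmetrizer:
`⟨w, (1/m) ∑_{j=0}^{m−1} C^j w⟩ = |⟨α,β⟩|² + (1/m)(1 − |⟨α,β⟩|²)`,
where `C = P_σ` and `σ(i) = i + 1 (mod m)`. -/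
theorem stmt_5 (m d : ℕ) (hm : 1 ≤ m) (hd : 1 ≤ d)
    (α β : Fin d → ℂ)
    (hα : ∑ i, star (α i) * α i = 1) (hβ : ∑ i, star (β i) * β i = 1)
    (last : Fin m) (hlast : last = ⟨m - 1, by omega⟩)
    (w : (Fin m → Fin d) → ℂ)
    (hw : w = fun f => ∏ i, (if i = last then β (f i) else α (f i)))
    (σ : Equiv.Perm (Fin m)) (hσ : ∀ i : Fin m, (σ i : ℕ) = ((i : ℕ) + 1) % m) :
    (m : ℂ)⁻¹ * ∑ j ∈ Finset.range m, ∑ f, star (w f) * w (f ∘ ⇑(σ ^ j))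
      = (Complex.normSq (∑ i, star (α i) * β i) : ℂ)
        + (m : ℂ)⁻¹ * (1 - (Complex.normSq (∑ i, star (α i) * β i) : ℂ)) := by
  have hlast' : (last : ℕ) = m - 1 := by rw [hlast]
  clear hlast
  set g : Fin m → Fin d → ℂ := fun i x => if i = last then β x else α x with hg
  set B : ℂ := ∑ i, star (α i) * β i with hB
  -- powers of σ act by addition mod m
  have hpow : ∀ (j : ℕ) (i : Fin m), ((σ ^ j) i : ℕ) = ((i : ℕ) + j) % m := by
    intro j
    induction j with
    | zero => intro i; simp [Nat.mod_eq_of_lt i.isLt]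
    | succ j ih =>
      intro i
      rw [pow_succ, Equiv.Perm.mul_apply, ih, hσ, Nat.mod_add_mod]
      congr 1; omega
  -- each f-sum factorizes over registers
  have key : ∀ j : ℕ, ∑ f : Fin m → Fin d, star (w f) * w (f ∘ ⇑(σ ^ j))
      = ∏ i, ∑ x, star (g i x) * g ((σ ^ j)⁻¹ i) x := by
    intro j
    have step : ∀ f : Fin m → Fin d,
        star (w f) * w (f ∘ ⇑(σ ^ j))
          = ∏ i, (star (g i (f i)) * g ((σ ^ j)⁻¹ i) (f i)) := by
      intro f
      have h1 : w f = ∏ i, g i (f i) := by rw [hw]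
      have h2 : w (f ∘ ⇑(σ ^ j)) = ∏ i, g ((σ ^ j)⁻¹ i) (f i) := by
        rw [hw]
        calc (∏ i, if i = last then β ((f ∘ ⇑(σ ^ j)) i) else α ((f ∘ ⇑(σ ^ j)) i))
            = ∏ i, g ((σ ^ j)⁻¹ ((σ ^ j) i)) (f ((σ ^ j) i)) := by
              apply Finset.prod_congr rfl; intro i _
              rw [Equiv.Perm.inv_def, Equiv.symm_apply_apply]; rfl
          _ = ∏ i, g ((σ ^ j)⁻¹ i) (f i) :=
              Equiv.prod_comp (σ ^ j) (fun i => g ((σ ^ j)⁻¹ i) (f i))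
      rw [h1, h2]
      rw [show (star (∏ i, g i (f i)) : ℂ) = ∏ i, star (g i (f i)) by
        simpa using map_prod (starRingEnd ℂ) (fun i => g i (f i)) Finset.univ]
      rw [← Finset.prod_mul_distrib]
    simp_rw [step]
    rw [Finset.prod_univ_sum, Fintype.piFinset_univ]
  -- the j = 0 term gives 1
  have eval0 : ∏ i, ∑ x, star (g i x) * g ((σ ^ 0)⁻¹ i) x = 1 := by
    rw [Finset.prod_eq_one]
    intro i _
    simp only [pow_zero, inv_one, Equiv.Perm.one_apply]
    by_cases h : i = last
    · simp only [hg, h, if_pos rfl]; exact hβ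
    · simp only [hg, if_neg h]; exact hα
  -- σ^j has no fixed point at `last` for 1 ≤ j < m
  have hfix : ∀ j, 1 ≤ j → j < m → (σ ^ j) last ≠ last := by
    intro j h1 h2 hEq
    have hv := hpow j last
    rw [hEq, hlast'] at hv
    have h3 : (m - 1 + j) % m = m - 1 + j - m := by
      rw [Nat.mod_eq_sub_mod (by omega), Nat.mod_eq_of_lt (by omega)]
    omega
  -- each j ∈ [1, m) term gives |⟨α,β⟩|²
  have evalj : ∀ j, 1 ≤ j → j < m →
      ∏ i, ∑ x, star (g i x) * g ((σ ^ j)⁻¹ i) x = (Complex.normSq B : ℂ) := by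
    intro j h1 h2
    set τ := (σ ^ j)⁻¹ with hτ
    have hne : (σ ^ j) last ≠ last := hfix j h1 h2
    have hτlast : τ last ≠ last := by
      intro h; apply hne
      conv_lhs => rw [← h]
      exact Equiv.apply_symm_apply _ _
    have hfac : ∀ i : Fin m, i ≠ last → i ≠ (σ ^ j) last →
        ∑ x, star (g i x) * g (τ i) x = 1 := by
      intro i hi1 hi2
      have hτi : τ i ≠ last := by
        intro h
        exact hi2 (by rw [← show (σ ^ j) ((σ ^ j)⁻¹ i) = i from Equiv.apply_symm_apply (σ ^ j) i, ← hτ, h])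
      simp only [hg, if_neg hi1, if_neg hτi]
      exact hα
    have hA : ∑ x, star (g last x) * g (τ last) x = (starRingEnd ℂ) B := by
      simp only [hg, if_pos rfl, if_neg hτlast]
      rw [hB, map_sum]
      exact Finset.sum_congr rfl fun x _ => by
        simp only [map_mul, starRingEnd_apply, star_star]; ring
    have hBfac : ∑ x, star (g ((σ ^ j) last) x) * g (τ ((σ ^ j) last)) x = B := by
      simp only [hg, if_neg hne, hτ, Equiv.Perm.inv_def, Equiv.symm_apply_apply, if_pos rfl]; exact hB.symm
    rw [← Finset.mul_prod_erase Finset.univ _ (Finset.mem_univ last),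
        ← Finset.mul_prod_erase _ _
          (Finset.mem_erase.2 ⟨hne, Finset.mem_univ ((σ ^ j) last)⟩),
        Finset.prod_eq_one (fun i hi => by
          rcases Finset.mem_erase.1 hi with ⟨hi2, hi3⟩
          exact hfac i (Finset.mem_erase.1 hi3).1 hi2)]
    rw [mul_one, hA, hBfac, mul_comm, Complex.mul_conj]
  -- assemble the sum over j
  have hrange : Finset.range m = insert 0 (Finset.Ico 1 m) := by
    rw [Finset.range_eq_Ico, ← Finset.insert_Ico_add_one_left_eq_Ico hm]; rfl
  have hsum : ∑ j ∈ Finset.range m, ∑ f, star (w f) * w (f ∘ ⇑(σ ^ j))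
      = 1 + ((m : ℂ) - 1) * (Complex.normSq B : ℂ) := by
    rw [hrange, Finset.sum_insert (by simp), key 0, eval0]
    congr 1
    rw [Finset.sum_congr rfl (fun j hj => by
      rcases Finset.mem_Ico.1 hj with ⟨hj1, hj2⟩
      rw [key j, evalj j hj1 hj2]), Finset.sum_const, Nat.card_Ico,
      nsmul_eq_mul]
    congr 1
    push_cast [Nat.cast_sub hm]
    ring
  rw [hsum]
  have hm0 : (m : ℂ) ≠ 0 := Nat.cast_ne_zero.2 (by omega)
  field_simp
  ring
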